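/- arXiv:2006.16663 — 2 statements merged into one kernel-verified Lean document; each statement's English description precedes it below -/
import Mathlib

section
/- Let α, λ₀, λ, ρ, A be real constants with ρ < 0, let m(t) = -α λ₀ ρ⁻¹ + (α λ₀ ρ⁻¹ + λ) e^{ρ t}, and let v : ℝ → ℝ be differentiable and satisfy v'(t) = A m(t) + 2 ρ v(t) for all t ≥ 0 with v(0) = λ². Then v is bounded on [0, ∞), v(t) → A α λ₀ (2ρ²)⁻¹ as t → ∞, and the variance v(t) − m(t)² converges to A α λ₀ (2ρ²)⁻¹ − (α λ₀ ρ⁻¹)² as t → ∞. -/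
open Filter

/-- for ρ < 0, the second moment v (solving v' = A m + 2ρ v, v(0) = λ²,
with m the explicit first moment) is bounded on [0, ∞), v(t) → A α λ₀ (2ρ²)⁻¹, and the
variance v(t) − m(t)² converges to A α λ₀ (2ρ²)⁻¹ − (α λ₀ ρ⁻¹)². -/
theorem second_moment_bounded_and_tendsto (a l0 l r A : ℝ) (hr : r < 0)
    (m : ℝ → ℝ)
    (hmdef : ∀ t : ℝ, m t = -(a * l0) * r⁻¹ + (a * l0 * r⁻¹ + l) * Real.exp (r * t))
    (v : ℝ → ℝ)
    (hv : Differentiable ℝ v)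
    (hode : ∀ t : ℝ, 0 ≤ t → deriv v t = A * m t + 2 * r * v t)
    (h0 : v 0 = l ^ 2) :
    (∃ M : ℝ, ∀ t : ℝ, 0 ≤ t → |v t| ≤ M) ∧
      Tendsto v atTop (nhds (A * a * l0 * (2 * r ^ 2)⁻¹)) ∧
      Tendsto (fun t => v t - (m t) ^ 2) atTop
        (nhds (A * a * l0 * (2 * r ^ 2)⁻¹ - (a * l0 * r⁻¹) ^ 2)) := by
  have hr0 : r ≠ 0 := ne_of_lt hr
  set p : ℝ := A * a * l0 * (2 * r ^ 2)⁻¹ with hp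
  set q : ℝ := -(A * (a * l0 * r⁻¹ + l)) / r with hq
  set C : ℝ := l ^ 2 - p - q with hC
  set w : ℝ → ℝ := fun t => p + q * Real.exp (r * t) + C * Real.exp (2 * r * t) with hw
  have hE1 : ∀ t : ℝ, HasDerivAt (fun s => Real.exp (r * s)) (Real.exp (r * t) * r) t := by
    intro t
    simpa using ((hasDerivAt_id t).const_mul r).exp
  have hE2 : ∀ t : ℝ, HasDerivAt (fun s => Real.exp (2 * r * s)) (Real.exp (2 * r * t) * (2 * r)) t := by
    intro t
    simpa using ((hasDerivAt_id t).const_mul (2 * r)).exp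
  have hwd : ∀ t : ℝ, HasDerivAt w (q * (Real.exp (r * t) * r) + C * (Real.exp (2 * r * t) * (2 * r))) t := by
    intro t
    simpa [hw, add_assoc] using (((hE1 t).const_mul q).add ((hE2 t).const_mul C)).const_add p
  -- the candidate solution satisfies the ODE
  have hodeW : ∀ t : ℝ,
      q * (Real.exp (r * t) * r) + C * (Real.exp (2 * r * t) * (2 * r)) = A * m t + 2 * r * w t := by
    intro t
    rw [hmdef t, hw, hq, hp]
    field_simp
    ring
  -- key: v = w on [0, ∞)
  have key : ∀ t : ℝ, 0 ≤ t → v t = w t := by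
    intro t ht
    set g : ℝ → ℝ := fun s => (v s - w s) * Real.exp (-(2 * r) * s) with hg
    have hgder : ∀ s ∈ Set.Ico (0 : ℝ) t, HasDerivWithinAt g 0 (Set.Ici s) s := by
      intro s hs
      have hv' : HasDerivAt v (A * m s + 2 * r * v s) s := by
        rw [← hode s hs.1]; exact (hv s).hasDerivAt
      have hE : HasDerivAt (fun s => Real.exp (-(2 * r) * s)) (Real.exp (-(2 * r) * s) * (-(2 * r))) s := by
        simpa using ((hasDerivAt_id s).const_mul (-(2 * r))).exp
      have hprod := ((hv'.sub (hwd s)).mul hE)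
      have heq : (A * m s + 2 * r * v s - (q * (Real.exp (r * s) * r) + C * (Real.exp (2 * r * s) * (2 * r)))) *
          Real.exp (-(2 * r) * s) + (v s - w s) * (Real.exp (-(2 * r) * s) * (-(2 * r))) = 0 := by
        rw [hodeW s]; ring
      simp only [Pi.sub_apply] at hprod
      rw [heq] at hprod
      exact hprod.hasDerivWithinAt
    have hgcont : ContinuousOn g (Set.Icc 0 t) := by
      have hwc : Continuous w := by
        rw [hw]; fun_prop
      exact ((hv.continuous.sub hwc).mul
        (Real.continuous_exp.comp (continuous_const.mul continuous_id))).continuousOn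
    have hgt : g t = g 0 := constant_of_has_deriv_right_zero hgcont hgder t (by simp [ht])
    have hg0 : g 0 = 0 := by
      simp [hg, h0, hw, hC]
    have : (v t - w t) * Real.exp (-(2 * r) * t) = 0 := by rw [← hg0]; exact hgt
    have hex : Real.exp (-(2 * r) * t) ≠ 0 := Real.exp_ne_zero _
    have := mul_eq_zero.mp this
    rcases this with h | h
    · linarith [sub_eq_zero.mp (by linarith : v t - w t = 0)]
    · exact absurd h hex
  -- boundedness
  have hbound : ∃ M : ℝ, ∀ t : ℝ, 0 ≤ t → |v t| ≤ M := by
    refine ⟨|p| + |q| + |C|, fun t ht => ?_⟩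
    rw [key t ht, hw]
    have h1 : Real.exp (r * t) ≤ 1 := Real.exp_le_one_iff.mpr (mul_nonpos_of_nonpos_of_nonneg hr.le ht)
    have h2 : Real.exp (2 * r * t) ≤ 1 := by
      apply Real.exp_le_one_iff.mpr
      nlinarith
    have e1 : (0:ℝ) < Real.exp (r * t) := Real.exp_pos _
    have e2 : (0:ℝ) < Real.exp (2 * r * t) := Real.exp_pos _
    have b1 : |q * Real.exp (r * t)| ≤ |q| := by
      rw [abs_mul, abs_of_pos e1]; nlinarith [abs_nonneg q]
    have b2 : |C * Real.exp (2 * r * t)| ≤ |C| := by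
      rw [abs_mul, abs_of_pos e2]; nlinarith [abs_nonneg C]
    calc |p + q * Real.exp (r * t) + C * Real.exp (2 * r * t)|
        ≤ |p + q * Real.exp (r * t)| + |C * Real.exp (2 * r * t)| := abs_add_le _ _
      _ ≤ |p| + |q * Real.exp (r * t)| + |C * Real.exp (2 * r * t)| := by
          have := abs_add_le p (q * Real.exp (r * t)); linarith
      _ ≤ |p| + |q| + |C| := by linarith
  -- exp (r t) → 0
  have hrt : Tendsto (fun t : ℝ => r * t) atTop atBot := by
    simpa using (tendsto_id (α := ℝ) (x := atTop)).const_mul_atTop_of_neg hr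
  have h2rt : Tendsto (fun t : ℝ => 2 * r * t) atTop atBot := by
    have : 2 * r < 0 := by linarith
    simpa using (tendsto_id (α := ℝ) (x := atTop)).const_mul_atTop_of_neg this
  have hE1lim : Tendsto (fun t : ℝ => Real.exp (r * t)) atTop (nhds 0) :=
    Real.tendsto_exp_atBot.comp hrt
  have hE2lim : Tendsto (fun t : ℝ => Real.exp (2 * r * t)) atTop (nhds 0) :=
    Real.tendsto_exp_atBot.comp h2rt
  have hwlim : Tendsto w atTop (nhds p) := by
    have : Tendsto w atTop (nhds (p + q * 0 + C * 0)) :=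
      (tendsto_const_nhds.add (tendsto_const_nhds.mul hE1lim)).add (tendsto_const_nhds.mul hE2lim)
    simpa using this
  have hvw : v =ᶠ[atTop] w := by
    filter_upwards [eventually_ge_atTop (0:ℝ)] with t ht using key t ht
  have hvlim : Tendsto v atTop (nhds p) := hwlim.congr' hvw.symm
  refine ⟨hbound, hvlim, ?_⟩
  have hmlim : Tendsto m atTop (nhds (-(a * l0) * r⁻¹)) := by
    have : Tendsto (fun t => -(a * l0) * r⁻¹ + (a * l0 * r⁻¹ + l) * Real.exp (r * t)) atTop
        (nhds (-(a * l0) * r⁻¹ + (a * l0 * r⁻¹ + l) * 0)) :=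
      tendsto_const_nhds.add (tendsto_const_nhds.mul hE1lim)
    simpa using this.congr (fun x => (hmdef x).symm)
  have hm2 : Tendsto (fun t => (m t) ^ 2) atTop (nhds ((-(a * l0) * r⁻¹) ^ 2)) := hmlim.pow 2
  have : Tendsto (fun t => v t - (m t) ^ 2) atTop (nhds (p - (-(a * l0) * r⁻¹) ^ 2)) :=
    hvlim.sub hm2
  have hsq : (-(a * l0) * r⁻¹) ^ 2 = (a * l0 * r⁻¹) ^ 2 := by ring
  rw [hsq] at this
  exact this
end

section
/- Let C > 0 and let (h_n)_{n ≥ 0} be a sequence of continuous functions h_n : [0, ∞) → [0, ∞) such that h₀(t) ≤ 1 for all t ≥ 0, and for every n ≥ 1 and t ≥ 0, h_n(t) ≤ C + n C ∫₀ᵗ h_{n−1}(s) ds + Σ_{j=0}^{n−2} (n choose j) C ∫₀ᵗ h_{j+1}(s) ds (the sum being empty for n = 1). Then for each n ≥ 1 there exists a polynomial p_n of degree at most n with nonnegative coefficients, depending only on n and C, such that h_n(t) ≤ p_n(t) for all t ≥ 0. -/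
open MeasureTheory

lemma poly_mono_aux (p : Polynomial ℝ) (hp : ∀ i, 0 ≤ p.coeff i) {s t : ℝ}
    (hs : 0 ≤ s) (hst : s ≤ t) : p.eval s ≤ p.eval t := by
  rw [Polynomial.eval_eq_sum_range, Polynomial.eval_eq_sum_range]
  apply Finset.sum_le_sum
  intro i _
  exact mul_le_mul_of_nonneg_left (pow_le_pow_left₀ hs hst i) (hp i)

lemma integral_le_aux (f : ℝ → ℝ) (p : Polynomial ℝ) (hp : ∀ i, 0 ≤ p.coeff i)
    (hf : ContinuousOn f (Set.Ici 0)) (hb : ∀ s : ℝ, 0 ≤ s → f s ≤ p.eval s)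
    {t : ℝ} (ht : 0 ≤ t) : (∫ s in (0:ℝ)..t, f s) ≤ t * p.eval t := by
  have hIcc : Set.Icc (0:ℝ) t ⊆ Set.Ici 0 := Set.Icc_subset_Ici_self
  have hIf : IntervalIntegrable f volume 0 t := by
    apply ContinuousOn.intervalIntegrable
    rw [Set.uIcc_of_le ht]
    exact hf.mono hIcc
  have hIp : IntervalIntegrable (fun s => p.eval s) volume 0 t :=
    (Polynomial.continuous p).continuousOn.intervalIntegrable
  have hIc : IntervalIntegrable (fun _ : ℝ => p.eval t) volume 0 t :=
    intervalIntegrable_const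
  have h1 : (∫ s in (0:ℝ)..t, f s) ≤ ∫ s in (0:ℝ)..t, p.eval s := by
    apply intervalIntegral.integral_mono_on ht hIf hIp
    intro s hs
    exact hb s hs.1
  have h2 : (∫ s in (0:ℝ)..t, p.eval s) ≤ ∫ s in (0:ℝ)..t, p.eval t := by
    apply intervalIntegral.integral_mono_on ht hIp hIc
    intro s hs
    exact poly_mono_aux p hp hs.1 hs.2
  calc (∫ s in (0:ℝ)..t, f s) ≤ ∫ s in (0:ℝ)..t, p.eval t := h1.trans h2
    _ = t * p.eval t := by simp [intervalIntegral.integral_const, smul_eq_mul]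

lemma X_mul_coeff_nonneg (p : Polynomial ℝ) (hp : ∀ i, 0 ≤ p.coeff i) :
    ∀ i, 0 ≤ (Polynomial.X * p).coeff i := by
  intro i
  cases i with
  | zero => simp [Polynomial.mul_coeff_zero]
  | succ k => simpa [Polynomial.coeff_X_mul] using hp k

/-- analytic core of the finite moments lemma. If h₀ ≤ 1 and each h_n
satisfies the system of integral inequalities
h_n(t) ≤ C + n C ∫₀ᵗ h_{n−1} + Σ_{j=0}^{n−2} (n choose j) C ∫₀ᵗ h_{j+1},
then each h_n (n ≥ 1) is bounded on [0, ∞) by a polynomial of degree at most n with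
nonnegative coefficients. -/
theorem moments_polynomially_bounded (C : ℝ) (hC : 0 < C) (h : ℕ → ℝ → ℝ)
    (hcont : ∀ n : ℕ, ContinuousOn (h n) (Set.Ici 0))
    (hnonneg : ∀ n : ℕ, ∀ t : ℝ, 0 ≤ t → 0 ≤ h n t)
    (hzero : ∀ t : ℝ, 0 ≤ t → h 0 t ≤ 1)
    (hrec : ∀ n : ℕ, 1 ≤ n → ∀ t : ℝ, 0 ≤ t →
      h n t ≤ C + (n : ℝ) * C * (∫ s in (0 : ℝ)..t, h (n - 1) s)
        + ∑ j ∈ Finset.range (n - 1),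
            (n.choose j : ℝ) * C * (∫ s in (0 : ℝ)..t, h (j + 1) s)) :
    ∀ n : ℕ, 1 ≤ n → ∃ p : Polynomial ℝ,
      p.natDegree ≤ n ∧ (∀ i : ℕ, 0 ≤ p.coeff i) ∧
        ∀ t : ℝ, 0 ≤ t → h n t ≤ p.eval t := by
  have key : ∀ n : ℕ, ∃ p : Polynomial ℝ,
      p.natDegree ≤ n ∧ (∀ i : ℕ, 0 ≤ p.coeff i) ∧
        ∀ t : ℝ, 0 ≤ t → h n t ≤ p.eval t := by
    intro n
    induction n using Nat.strong_induction_on with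
    | _ n ih =>
      match n with
      | 0 =>
        refine ⟨1, by simp, ?_, ?_⟩
        · intro i
          rcases Nat.eq_zero_or_pos i with hi | hi
          · simp [hi]
          · simp [Polynomial.coeff_one, Nat.pos_iff_ne_zero.mp hi]
        · intro t ht; simpa using hzero t ht
      | m + 1 =>
        have H : ∀ k : ℕ, ∃ p : Polynomial ℝ, k < m + 1 →
            p.natDegree ≤ k ∧ (∀ i : ℕ, 0 ≤ p.coeff i) ∧
              ∀ t : ℝ, 0 ≤ t → h k t ≤ p.eval t := by
          intro k
          by_cases hk : k < m + 1
          · obtain ⟨p, hp⟩ := ih k hk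
            exact ⟨p, fun _ => hp⟩
          · exact ⟨0, fun hk' => absurd hk' hk⟩
        choose q hq using H
        have hqm := hq m (Nat.lt_succ_self m)
        set p : Polynomial ℝ :=
          Polynomial.C C + Polynomial.C ((m + 1 : ℝ) * C) * (Polynomial.X * q m)
            + ∑ j ∈ Finset.range m,
                Polynomial.C (((m + 1).choose j : ℝ) * C) * (Polynomial.X * q (j + 1))
          with hp_def
        refine ⟨p, ?_, ?_, ?_⟩
        · -- degree bound
          apply Polynomial.natDegree_add_le_of_degree_le
          · apply Polynomial.natDegree_add_le_of_degree_le
            · simp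
            · calc (Polynomial.C ((m + 1 : ℝ) * C) * (Polynomial.X * q m)).natDegree
                  ≤ (Polynomial.C ((m + 1 : ℝ) * C)).natDegree
                    + (Polynomial.X * (q m)).natDegree := Polynomial.natDegree_mul_le
                _ ≤ 0 + (Polynomial.X.natDegree + (q m).natDegree) := by
                    exact add_le_add (le_of_eq (Polynomial.natDegree_C _)) Polynomial.natDegree_mul_le
                _ ≤ 0 + (1 + m) := by
                    exact add_le_add le_rfl
                      (add_le_add Polynomial.natDegree_X_le hqm.1)
                _ ≤ m + 1 := by omega
          · apply Polynomial.natDegree_sum_le_of_forall_le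
            intro j hj
            have hj' : j + 1 < m + 1 := by
              exact Nat.succ_lt_succ (Finset.mem_range.mp hj)
            have hqj := hq (j + 1) hj'
            calc (Polynomial.C (((m + 1).choose j : ℝ) * C)
                  * (Polynomial.X * q (j + 1))).natDegree
                ≤ (Polynomial.C (((m + 1).choose j : ℝ) * C)).natDegree
                  + (Polynomial.X * (q (j + 1))).natDegree := Polynomial.natDegree_mul_le
              _ ≤ 0 + (Polynomial.X.natDegree + (q (j + 1)).natDegree) :=
                  add_le_add (le_of_eq (Polynomial.natDegree_C _)) Polynomial.natDegree_mul_le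
              _ ≤ 0 + (1 + (j + 1)) :=
                  add_le_add le_rfl (add_le_add Polynomial.natDegree_X_le hqj.1)
              _ ≤ m + 1 := by omega
        · -- nonneg coefficients
          intro i
          rw [hp_def]
          simp only [Polynomial.coeff_add, Polynomial.finset_sum_coeff,
            Polynomial.coeff_C_mul]
          have t1 : 0 ≤ (Polynomial.C C).coeff i := by
            rcases Nat.eq_zero_or_pos i with hi | hi
            · simp [hi]; exact hC.le
            · simp [Polynomial.coeff_C, Nat.pos_iff_ne_zero.mp hi]
          have t2 : 0 ≤ (m + 1 : ℝ) * C * (Polynomial.X * q m).coeff i := by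
            apply mul_nonneg (mul_nonneg (by positivity) hC.le)
            exact X_mul_coeff_nonneg _ hqm.2.1 i
          have t3 : 0 ≤ ∑ j ∈ Finset.range m,
              ((m + 1).choose j : ℝ) * C * (Polynomial.X * q (j + 1)).coeff i := by
            apply Finset.sum_nonneg
            intro j hj
            have hj' : j + 1 < m + 1 := Nat.succ_lt_succ (Finset.mem_range.mp hj)
            apply mul_nonneg (mul_nonneg (by positivity) hC.le)
            exact X_mul_coeff_nonneg _ (hq (j + 1) hj').2.1 i
          positivity
        · -- the bound
          intro t ht
          have hrec' := hrec (m + 1) (Nat.le_add_left 1 m) t ht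
          simp only [Nat.add_sub_cancel] at hrec'
          have I1 : (∫ s in (0:ℝ)..t, h m s) ≤ t * (q m).eval t :=
            integral_le_aux (h m) (q m) hqm.2.1 (hcont m) hqm.2.2 ht
          have B1 : ((m + 1 : ℕ) : ℝ) * C * (∫ s in (0:ℝ)..t, h m s)
              ≤ ((m + 1 : ℕ) : ℝ) * C * (t * (q m).eval t) :=
            mul_le_mul_of_nonneg_left I1 (mul_nonneg (by positivity) hC.le)
          have B2 : ∑ j ∈ Finset.range m,
                ((m + 1).choose j : ℝ) * C * (∫ s in (0:ℝ)..t, h (j + 1) s)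
              ≤ ∑ j ∈ Finset.range m,
                ((m + 1).choose j : ℝ) * C * (t * (q (j + 1)).eval t) := by
            apply Finset.sum_le_sum
            intro j hj
            have hj' : j + 1 < m + 1 := Nat.succ_lt_succ (Finset.mem_range.mp hj)
            have hqj := hq (j + 1) hj'
            exact mul_le_mul_of_nonneg_left
              (integral_le_aux (h (j + 1)) (q (j + 1)) hqj.2.1 (hcont (j + 1))
                hqj.2.2 ht)
              (mul_nonneg (by positivity) hC.le)
          have hev : p.eval t
              = C + (m + 1 : ℝ) * C * (t * (q m).eval t)
                + ∑ j ∈ Finset.range m,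
                    ((m + 1).choose j : ℝ) * C * (t * (q (j + 1)).eval t) := by
            simp [hp_def, Polynomial.eval_finset_sum]
          rw [hev]
          calc h (m + 1) t
              ≤ C + ((m + 1 : ℕ) : ℝ) * C * (∫ s in (0:ℝ)..t, h m s)
                + ∑ j ∈ Finset.range m,
                    (((m + 1).choose j : ℕ) : ℝ) * C
                      * (∫ s in (0:ℝ)..t, h (j + 1) s) := hrec'
            _ ≤ C + (m + 1 : ℝ) * C * (t * (q m).eval t)
                + ∑ j ∈ Finset.range m,
                    ((m + 1).choose j : ℝ) * C * (t * (q (j + 1)).eval t) := by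
                push_cast at B1 B2 ⊢
                exact add_le_add (add_le_add le_rfl B1) B2
  intro n _
  exact key n
end
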